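/- Let Q be an (N+1)×(N+1) matrix with superdiagonal entries Q_{i,i+1} = c_i for 0 ≤ i ≤ N-1, first-column entries Q_{i,0} = b_i for 1 ≤ i ≤ N, and all other entries zero. Then det(I - Q) = 1 - Σ_{j=1}^{N} (c_0 c_1 ⋯ c_{j-1}) b_j. -/

import Mathlib

open Finset Matrix

private def Mat (N : ℕ) (c b : ℕ → ℝ) : Matrix (Fin (N + 1)) (Fin (N + 1)) ℝ :=
  Matrix.of fun i j =>
    (if (i : ℕ) = (j : ℕ) then (1 : ℝ) else 0) -
      (if (j : ℕ) = (i : ℕ) + 1 then c i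
        else if (j : ℕ) = 0 ∧ 1 ≤ (i : ℕ) then b i else 0)

private lemma mat_det (N : ℕ) (c b : ℕ → ℝ) :
    (Mat N c b).det = 1 - ∑ j ∈ Finset.Icc 1 N, (∏ i ∈ Finset.range j, c i) * b j := by
  induction N with
  | zero =>
    simp [Mat, Matrix.det_fin_one]
  | succ N ih =>
    set L : Fin (N + 2) := Fin.last (N + 1) with hL
    have hv : (L : ℕ) = N + 1 := rfl
    rw [Matrix.det_succ_row (Mat (N+1) c b) L]
    have hsum :
        (∑ j : Fin (N+2), (-1 : ℝ) ^ ((L : ℕ) + (j : ℕ)) * Mat (N+1) c b L j *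
          det ((Mat (N+1) c b).submatrix L.succAbove j.succAbove)) =
        ((-1 : ℝ) ^ ((L : ℕ) + ((0 : Fin (N+2)) : ℕ)) * Mat (N+1) c b L 0 *
          det ((Mat (N+1) c b).submatrix L.succAbove (0 : Fin (N+2)).succAbove)) +
        ((-1 : ℝ) ^ ((L : ℕ) + (L : ℕ)) * Mat (N+1) c b L L *
          det ((Mat (N+1) c b).submatrix L.succAbove L.succAbove)) := by
      refine Finset.sum_eq_add (0 : Fin (N+2)) L ?_ ?_ ?_ ?_
      · simp [hL, Fin.ext_iff]
      · intro j _ hj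
        have h1 : (j : ℕ) ≠ 0 := fun h => hj.1 (Fin.ext h)
        have h2 : (j : ℕ) ≠ N + 1 := fun h => hj.2 (Fin.ext h)
        have h3 : (j : ℕ) < N + 2 := j.isLt
        have hz : Mat (N+1) c b L j = 0 := by
          simp only [Mat, Matrix.of_apply]
          rw [hv]
          rw [if_neg (by omega), if_neg (by omega), if_neg (by simp [h1]), sub_zero]
        simp [hz]
      · simp
      · simp
    rw [hsum]
    -- the lower-triangular minor
    have hlow : det ((Mat (N+1) c b).submatrix L.succAbove (0 : Fin (N+2)).succAbove)
        = (-1 : ℝ) ^ (N + 1) * ∏ i ∈ Finset.range (N + 1), c i := by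
      have hd : det ((Mat (N+1) c b).submatrix L.succAbove (0 : Fin (N+2)).succAbove)
          = ∏ i : Fin (N+1),
            ((Mat (N+1) c b).submatrix L.succAbove (0 : Fin (N+2)).succAbove) i i := by
        apply Matrix.det_of_lowerTriangular
        intro i j hij
        have hij' : (i : ℕ) < (j : ℕ) := hij
        simp only [Matrix.submatrix_apply, hL, Fin.succAbove_last, Fin.succAbove_zero, Mat,
          Matrix.of_apply, Fin.coe_castSucc, Fin.val_succ]
        rw [if_neg (by omega), if_neg (by omega), if_neg (by omega), sub_zero]
      rw [hd]
      have hdiag : ∀ i : Fin (N+1),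
          ((Mat (N+1) c b).submatrix L.succAbove (0 : Fin (N+2)).succAbove) i i = -c i := by
        intro i
        simp only [Matrix.submatrix_apply, hL, Fin.succAbove_last, Fin.succAbove_zero, Mat,
          Matrix.of_apply, Fin.coe_castSucc, Fin.val_succ]
        rw [if_neg (by omega)]
        simp
      simp only [hdiag]
      have : ∀ i : Fin (N+1), -c (i : ℕ) = (-1) * c (i : ℕ) := fun i => by ring
      simp only [this, Finset.prod_mul_distrib, Finset.prod_const, Finset.card_univ,
        Fintype.card_fin, Fin.prod_univ_eq_prod_range]
    -- the principal minor is the smaller matrix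
    have hmin : (Mat (N+1) c b).submatrix L.succAbove L.succAbove = Mat N c b := by
      ext i j
      simp only [Matrix.submatrix_apply, hL, Fin.succAbove_last, Mat, Matrix.of_apply,
        Fin.coe_castSucc]
    have hL0 : Mat (N+1) c b L 0 = -b (N+1) := by
      simp only [Mat, Matrix.of_apply, Fin.val_zero]
      rw [hv]
      norm_num
    have hLL : Mat (N+1) c b L L = 1 := by
      simp only [Mat, Matrix.of_apply]
      rw [hv]
      norm_num
    rw [hlow, hmin, hL0, hLL, ih, hv]
    rw [Finset.sum_Icc_succ_top (by omega : 1 ≤ N + 1)]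
    have ht : ((-1 : ℝ) ^ (N+1)) * ((-1 : ℝ) ^ (N+1)) = 1 := by
      rw [← pow_add]; exact Even.neg_one_pow ⟨N + 1, by ring⟩
    have h2 : ((-1 : ℝ) ^ (N + 1 + (N + 1))) = 1 := Even.neg_one_pow ⟨N + 1, by ring⟩
    have h0 : (((0 : Fin (N+2))) : ℕ) = 0 := rfl
    rw [h0, add_zero, h2]
    linear_combination (-(b (N+1)) * (∏ i ∈ Finset.range (N+1), c i)) * ht

theorem parallel_repair_det (N : ℕ) (c b : ℕ → ℝ)
    (Q : Matrix (Fin (N + 1)) (Fin (N + 1)) ℝ)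
    (hQ : ∀ i j : Fin (N + 1),
      Q i j = if (j : ℕ) = (i : ℕ) + 1 then c i
              else if (j : ℕ) = 0 ∧ 1 ≤ (i : ℕ) then b i else 0) :
    (1 - Q).det = 1 - ∑ j ∈ Finset.Icc 1 N, (∏ i ∈ Finset.range j, c i) * b j := by
  have h : (1 - Q) = Mat N c b := by
    ext i j
    simp only [Mat, Matrix.of_apply, Matrix.sub_apply, Matrix.one_apply, hQ i j, Fin.ext_iff]
  rw [h, mat_det]
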